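/- Let P be a finite 2-group. Then there exists a characteristic subgroup D of P such that every element of D has order dividing 4, [D,P] ≤ Z(D), and every automorphism of P of odd order which fixes D pointwise is the identity. -/

import Mathlib

open Subgroup

section ThompsonHelpers

variable {G : Type*} [Group G]

/-- Key "coprimality" trick: if `φ x = x * c` with `c` a fixed `2`-element and `φ` of odd
order, then `φ x = x`. -/
lemma fix_of_odd_aux (φ : MulAut G) (hn : Odd (orderOf φ)) {x c : G}
    (hx : φ x = x * c) (hc : φ c = c) {m : ℕ} (hc2 : c ^ 2 ^ m = 1) : φ x = x := by
  have hcfix : ∀ k : ℕ, (φ ^ k) c = c := by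
    intro k
    induction k with
    | zero => rfl
    | succ k ih => rw [pow_succ, MulAut.mul_apply, hc, ih]
  have key : ∀ k : ℕ, (φ ^ k) x = x * c ^ k := by
    intro k
    induction k with
    | zero => simp
    | succ k ih =>
      rw [pow_succ, MulAut.mul_apply, hx, map_mul, ih, hcfix, pow_succ, mul_assoc]
  have h1 : x * c ^ orderOf φ = x := by
    rw [← key, pow_orderOf_eq_one]
    rfl
  have hcn : c ^ orderOf φ = 1 := by
    have h2 : x * c ^ orderOf φ = x * 1 := by rw [mul_one]; exact h1
    exact mul_left_cancel h2
  have hdvd1 : orderOf c ∣ orderOf φ := orderOf_dvd_of_pow_eq_one hcn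
  have hdvd2 : orderOf c ∣ 2 ^ m := orderOf_dvd_of_pow_eq_one hc2
  have hcop : Nat.Coprime (2 ^ m) (orderOf φ) :=
    Nat.Coprime.pow_left _ (Nat.coprime_two_left.mpr hn)
  have hdvd : orderOf c ∣ Nat.gcd (2 ^ m) (orderOf φ) := Nat.dvd_gcd hdvd2 hdvd1
  rw [hcop] at hdvd
  have hc1 : c = 1 := orderOf_eq_one_iff.mp (Nat.dvd_one.mp hdvd)
  rw [hx, hc1, mul_one]

/-- In a group, an element `b ≠ 1` of `2`-power order has an element of order `2` among
its powers. -/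
lemma exists_sq_one_zpowers : ∀ (m : ℕ) (b : G), b ≠ 1 → b ^ 2 ^ m = 1 →
    ∃ e ∈ Subgroup.zpowers b, e ≠ 1 ∧ e ^ 2 = 1 := by
  intro m
  induction m with
  | zero => intro b hb h; simp at h; exact absurd h hb
  | succ m ih =>
    intro b hb h
    by_cases h2 : b ^ 2 = 1
    · exact ⟨b, Subgroup.mem_zpowers b, hb, h2⟩
    · obtain ⟨e, he, he1, he2⟩ := ih (b ^ 2) h2 (by rw [← pow_mul, ← pow_succ']; exact h)
      refine ⟨e, ?_, he1, he2⟩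
      have hle : Subgroup.zpowers (b ^ 2) ≤ Subgroup.zpowers b :=
        Subgroup.zpowers_le.mpr (Subgroup.pow_mem _ (Subgroup.mem_zpowers b) 2)
      exact hle he

lemma pow_four_eq (a : G) : a ^ 4 = a * a * (a * a) := by
  rw [show (4 : ℕ) = 2 + 2 from rfl, pow_add, sq]

/-- If `t = [y,x]` commutes with `x` and `y * x² = x² * y`, then `t² = 1`. -/
lemma comm_sq_eq_one {x y t : G} (ht : t = y * x * y⁻¹ * x⁻¹)
    (htx : x * t = t * x) (hx2y : y * (x * x) = x * x * y) : t * t = 1 := by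
  have h3 : x⁻¹ * t = t * x⁻¹ := (Commute.inv_left htx).eq
  calc t * t = (y * x * y⁻¹ * x⁻¹) * t := by rw [← ht]
    _ = y * x * y⁻¹ * (x⁻¹ * t) := by group
    _ = y * x * y⁻¹ * (t * x⁻¹) := by rw [h3]
    _ = y * x * y⁻¹ * ((y * x * y⁻¹ * x⁻¹) * x⁻¹) := by rw [← ht]
    _ = y * (x * x) * y⁻¹ * x⁻¹ * x⁻¹ := by group
    _ = x * x * y * y⁻¹ * x⁻¹ * x⁻¹ := by rw [hx2y]
    _ = 1 := by group

/-- Product of two elements of order dividing 4, when the commutator `t` is an involution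
commuting with both, and the squares commute, again has order dividing `4`. -/
lemma mul_pow_four {x y t : G} (ht : t = y * x * y⁻¹ * x⁻¹)
    (htx : x * t = t * x) (hty : y * t = t * y) (htt : t * t = 1)
    (hxy2 : y * y * (x * x) = x * x * (y * y)) (hx4 : x ^ 4 = 1) (hy4 : y ^ 4 = 1) :
    (x * y) ^ 4 = 1 := by
  have h1 : y * x = t * (x * y) := by rw [ht]; group
  have hsq : (x * y) * (x * y) = t * (x * x * (y * y)) := by
    calc (x * y) * (x * y) = x * (y * x) * y := by group
      _ = x * (t * (x * y)) * y := by rw [h1]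
      _ = (x * t) * (x * y * y) := by group
      _ = (t * x) * (x * y * y) := by rw [htx]
      _ = t * (x * x * (y * y)) := by group
  have hts : (x * x * (y * y)) * t = t * (x * x * (y * y)) := by
    have cx : Commute t x := htx.symm
    have cy : Commute t y := hty.symm
    exact ((cx.mul_right cx).mul_right (cy.mul_right cy)).symm.eq
  calc (x * y) ^ 4 = ((x * y) * (x * y)) * ((x * y) * (x * y)) := pow_four_eq _
    _ = t * (x * x * (y * y)) * (t * (x * x * (y * y))) := by rw [hsq]
    _ = t * ((x * x * (y * y)) * t) * (x * x * (y * y)) := by group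
    _ = t * (t * (x * x * (y * y))) * (x * x * (y * y)) := by rw [hts]
    _ = (t * t) * ((x * x) * (y * y * (x * x)) * (y * y)) := by group
    _ = (t * t) * ((x * x) * (x * x * (y * y)) * (y * y)) := by rw [hxy2]
    _ = (t * t) * ((x * x * (x * x)) * (y * y * (y * y))) := by group
    _ = (t * t) * ((x ^ 4) * (y ^ 4)) := by rw [pow_four_eq, pow_four_eq]
    _ = 1 := by rw [htt, hx4, hy4]; group

lemma char_apply_mem {H : Subgroup G} (h : H.Characteristic)
    (φ : MulAut G) {x : G} (hx : x ∈ H) : φ x ∈ H := by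
  have hfix := h.fixed φ
  rw [← hfix] at hx
  exact Subgroup.mem_comap.mp hx

end ThompsonHelpers

/-- **Thompson-type subgroup for `p = 2`.** Every finite `2`-group `P` has a
characteristic subgroup `D` of exponent dividing `4` with `[D,P] ≤ Z(D)` such that every
automorphism of `P` of odd order fixing `D` pointwise is the identity. -/
theorem exists_characteristic_detecting_subgroup_two
    (P : Type) [Group P] [Finite P] (hP : IsPGroup 2 P) :
    ∃ D : Subgroup P, D.Characteristic ∧ (∀ x ∈ D, x ^ 4 = 1) ∧
      ⁅D, (⊤ : Subgroup P)⁆ ≤ D ⊓ Subgroup.centralizer (D : Set P) ∧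
      ∀ φ : MulAut P, Odd (orderOf φ) → (∀ x ∈ D, φ x = x) → φ = 1 := by
  classical
  -- the family of "good" characteristic subgroups
  set S : Set (Subgroup P) :=
    {C | C.Characteristic ∧ (∀ x ∈ C, ∀ g : P, x * g * x⁻¹ * g⁻¹ ∈ C ⊓ centralizer (C : Set P))
      ∧ (∀ x ∈ C, x ^ 2 ∈ centralizer (C : Set P))} with hS
  have hbot : (⊥ : Subgroup P) ∈ S := by
    refine ⟨inferInstance, ?_, ?_⟩
    · intro x hx g
      rw [Subgroup.mem_bot] at hx
      subst hx
      simp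
    · intro x hx
      rw [Subgroup.mem_bot] at hx
      subst hx
      simpa using Subgroup.one_mem _
  obtain ⟨C, hCS, hCmax⟩ := Set.Finite.exists_maximalFor id S (Set.toFinite S) ⟨⊥, hbot⟩
  obtain ⟨hCchar, hCcomm, hCsq⟩ := hCS
  haveI := hCchar
  haveI hCn : C.Normal := inferInstance
  set Z : Subgroup P := C ⊓ centralizer (C : Set P) with hZdef
  have hZmemC : Z ≤ C := inf_le_left
  have hZcent : Z ≤ centralizer (C : Set P) := inf_le_right
  haveI hHchar : (centralizer (C : Set P)).Characteristic := inferInstance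
  have hZchar : Z.Characteristic := by
    rw [Subgroup.characteristic_iff_le_comap]
    intro φ x hx
    exact Subgroup.mem_comap.mpr
      (Subgroup.mem_inf.mpr ⟨char_apply_mem hCchar φ (hZmemC hx),
        char_apply_mem hHchar φ (hZcent hx)⟩)
  haveI := hZchar
  haveI hZn : Z.Normal := inferInstance
  have hcent_comm : ∀ z ∈ centralizer (C : Set P), ∀ a ∈ C, a * z = z * a :=
    fun z hz a ha => Subgroup.mem_centralizer_iff.mp hz a ha
  -- commutators of elements of `C` are central involutions in `C`
  have ht2 : ∀ x ∈ C, ∀ y ∈ C, (y * x * y⁻¹ * x⁻¹) * (y * x * y⁻¹ * x⁻¹) = 1 := by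
    intro x hx y hy
    have htZ : y * x * y⁻¹ * x⁻¹ ∈ Z := hCcomm y hy x
    have htx : x * (y * x * y⁻¹ * x⁻¹) = (y * x * y⁻¹ * x⁻¹) * x :=
      hcent_comm _ (hZcent htZ) x hx
    have hx2y : y * (x * x) = x * x * y := by
      have h := hcent_comm (x ^ 2) (hCsq x hx) y hy
      rw [pow_two] at h
      exact h
    exact comm_sq_eq_one rfl htx hx2y
  -- The key "critical subgroup" property: the centralizer of C is contained in C
  have hHle : centralizer (C : Set P) ≤ C := by
    by_contra hnot
    obtain ⟨h₀, hh₀H, hh₀C⟩ := SetLike.not_le_iff_exists.mp hnot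
    haveI hHn : (centralizer (C : Set P)).Normal := inferInstance
    have hQ : IsPGroup 2 (P ⧸ Z) := hP.to_quotient Z
    set mk : P →* P ⧸ Z := QuotientGroup.mk' Z with hmkdef
    set N : Subgroup (P ⧸ Z) := (centralizer (C : Set P)).map mk with hNdef
    haveI hNn : N.Normal := Subgroup.Normal.map hHn mk (QuotientGroup.mk'_surjective Z)
    haveI : Finite (P ⧸ Z) := Quotient.finite _
    have hmkh₀ : mk h₀ ∈ N := Subgroup.mem_map_of_mem mk hh₀H
    have hmkh₀1 : mk h₀ ≠ 1 := by
      intro h1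
      exact hh₀C (hZmemC ((QuotientGroup.eq_one_iff h₀).mp h1))
    haveI : Nontrivial N :=
      ⟨⟨⟨mk h₀, hmkh₀⟩, 1, fun h => hmkh₀1 (by simpa using congrArg Subtype.val h)⟩⟩
    have hNp : IsPGroup 2 N := hQ.to_subgroup N
    haveI : Fact (Nat.Prime 2) := ⟨Nat.prime_two⟩
    have hcard : 2 ∣ Nat.card N := by
      obtain ⟨k, hk⟩ := IsPGroup.iff_card.mp hNp
      rcases k with _ | k
      · rw [pow_zero] at hk
        exact absurd hk Finite.one_lt_card.ne'
      · rw [hk]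
        exact dvd_pow_self 2 k.succ_ne_zero
    have hconj : IsPGroup 2 (ConjAct (P ⧸ Z)) := hQ.of_equiv ConjAct.toConjAct
    obtain ⟨b, hbfix, hb1⟩ := hconj.exists_fixed_point_of_prime_dvd_card_of_fixed_point
      (α := N) hcard (a := 1) (fun g => smul_one g)
    have hbQ : (b : P ⧸ Z) ∈ Subgroup.center (P ⧸ Z) := by
      rw [Subgroup.mem_center_iff]
      intro q
      have h := hbfix (ConjAct.toConjAct q)
      have h' : (ConjAct.toConjAct q) • (b : P ⧸ Z) = (b : P ⧸ Z) := congrArg Subtype.val h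
      rw [ConjAct.toConjAct_smul] at h'
      calc q * (b : P ⧸ Z) = (q * b * q⁻¹) * q := by group
        _ = (b : P ⧸ Z) * q := by rw [h']
    have hbne : (b : P ⧸ Z) ≠ 1 := by
      intro h1
      exact hb1 (Subtype.ext h1).symm
    obtain ⟨m, hm⟩ := hQ (b : P ⧸ Z)
    obtain ⟨e, heb, he1, he2⟩ := exists_sq_one_zpowers m (b : P ⧸ Z) hbne hm
    have heN : e ∈ N := Subgroup.zpowers_le.mpr b.2 heb
    have hecen : e ∈ Subgroup.center (P ⧸ Z) := Subgroup.zpowers_le.mpr hbQ heb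
    obtain ⟨h₁, hh₁H, hh₁e⟩ := Subgroup.mem_map.mp heN
    have hh₁C : h₁ ∉ C := by
      intro hc
      apply he1
      rw [← hh₁e]
      exact (QuotientGroup.eq_one_iff h₁).mpr (Subgroup.mem_inf.mpr ⟨hc, hh₁H⟩)
    have hh₁sq : h₁ ^ 2 ∈ Z := by
      have : mk (h₁ ^ 2) = 1 := by rw [map_pow, hh₁e, he2]
      exact (QuotientGroup.eq_one_iff _).mp this
    have hh₁comm : ∀ g : P, h₁ * g * h₁⁻¹ * g⁻¹ ∈ Z := by
      intro g
      have hcen := Subgroup.mem_center_iff.mp hecen (mk g)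
      have h2 : mk (h₁ * g * h₁⁻¹ * g⁻¹) = 1 := by
        rw [map_mul, map_mul, map_mul, map_inv, map_inv, hh₁e]
        calc e * mk g * e⁻¹ * (mk g)⁻¹ = (mk g * e) * e⁻¹ * (mk g)⁻¹ := by rw [hcen]
          _ = 1 := by group
      exact (QuotientGroup.eq_one_iff _).mp h2
    let K : Subgroup P :=
      { carrier := {x : P | x ∈ centralizer (C : Set P) ∧ x ^ 2 ∈ Z ∧
          ∀ g : P, x * g * x⁻¹ * g⁻¹ ∈ Z}
        one_mem' := ⟨Subgroup.one_mem _, by simpa using Z.one_mem,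
          fun g => by simpa using Z.one_mem⟩
        mul_mem' := by
          rintro x y ⟨hxH, hx2, hxc⟩ ⟨hyH, hy2, hyc⟩
          refine ⟨mul_mem hxH hyH, ?_, ?_⟩
          · have hw : x * y * x⁻¹ * y⁻¹ ∈ Z := hxc y
            have hmZ : x⁻¹ * (x * y * x⁻¹ * y⁻¹)⁻¹ * x ∈ Z := by
              have hconj2 := hZn.conj_mem _ (inv_mem hw) x⁻¹
              simpa using hconj2
            have hid : (x * y) ^ 2 = x ^ 2 * (x⁻¹ * (x * y * x⁻¹ * y⁻¹)⁻¹ * x) * y ^ 2 := by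
              rw [pow_two, pow_two, pow_two]
              group
            rw [hid]
            exact mul_mem (mul_mem hx2 hmZ) hy2
          · intro g
            have hid : (x * y) * g * (x * y)⁻¹ * g⁻¹
                = x * (y * g * y⁻¹ * g⁻¹) * x⁻¹ * (x * g * x⁻¹ * g⁻¹) := by group
            rw [hid]
            exact mul_mem (hZn.conj_mem _ (hyc g) x) (hxc g)
        inv_mem' := by
          rintro x ⟨hxH, hx2, hxc⟩
          refine ⟨inv_mem hxH, by rw [inv_pow]; exact inv_mem hx2, ?_⟩
          intro g
          have hid : x⁻¹ * g * x⁻¹⁻¹ * g⁻¹ = x⁻¹ * (x * g * x⁻¹ * g⁻¹)⁻¹ * x := by group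
          rw [hid]
          have hconj2 := hZn.conj_mem _ (inv_mem (hxc g)) x⁻¹
          simpa using hconj2 }
    have hKmem : ∀ x : P, x ∈ K ↔ x ∈ centralizer (C : Set P) ∧ x ^ 2 ∈ Z ∧
        ∀ g : P, x * g * x⁻¹ * g⁻¹ ∈ Z := fun x => Iff.rfl
    have hKinv : ∀ (φ : MulAut P), ∀ x ∈ K, φ x ∈ K := by
      intro φ x hx
      obtain ⟨hxH, hx2, hxc⟩ := (hKmem x).mp hx
      refine (hKmem _).mpr ⟨char_apply_mem hHchar φ hxH, ?_, ?_⟩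
      · rw [← map_pow]
        exact char_apply_mem hZchar φ hx2
      · intro g
        have hid : φ x * g * (φ x)⁻¹ * g⁻¹ = φ (x * (φ.symm g) * x⁻¹ * (φ.symm g)⁻¹) := by
          rw [map_mul, map_mul, map_mul, map_inv, map_inv, MulEquiv.apply_symm_apply]
        rw [hid]
        exact char_apply_mem hZchar φ (hxc (φ.symm g))
    haveI hKn : K.Normal := by
      constructor
      intro n hn g
      have hmem := hKinv (MulAut.conj g) n hn
      simpa using hmem
    have hCK : ∀ x ∈ C ⊔ K, ∃ c ∈ C, ∃ k ∈ K, c * k = x := by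
      intro x hx
      rw [← SetLike.mem_coe, Subgroup.mul_normal C K] at hx
      exact hx
    have hKC : ∀ k ∈ K, ∀ c ∈ C, c * k = k * c :=
      fun k hk c hc => hcent_comm k ((hKmem k).mp hk).1 c hc
    have hZC' : ∀ z ∈ Z, ∀ x ∈ C ⊔ K, x * z = z * x := by
      intro z hz x hx
      obtain ⟨c, hc, k, hk, rfl⟩ := hCK x hx
      have h1 : z * k = k * z := hKC k hk z (hZmemC hz)
      have h2 : c * z = z * c := hcent_comm z (hZcent hz) c hc
      calc c * k * z = c * (k * z) := by rw [mul_assoc]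
        _ = c * (z * k) := by rw [← h1]
        _ = (c * z) * k := by rw [mul_assoc]
        _ = (z * c) * k := by rw [h2]
        _ = z * (c * k) := by rw [mul_assoc]
    have hC'S : C ⊔ K ∈ S := by
      refine ⟨?_, ?_, ?_⟩
      · rw [Subgroup.characteristic_iff_le_comap]
        intro φ x hx
        refine Subgroup.mem_comap.mpr ?_
        obtain ⟨c, hc, k, hk, rfl⟩ := hCK x hx
        rw [map_mul]
        exact mul_mem (le_sup_left (a := C) (b := K) (char_apply_mem hCchar φ hc))
          (le_sup_right (a := C) (b := K) (hKinv φ k hk))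
      · intro x hx g
        obtain ⟨c, hc, k, hk, rfl⟩ := hCK x hx
        have hid : (c * k) * g * (c * k)⁻¹ * g⁻¹
            = c * (k * g * k⁻¹ * g⁻¹) * c⁻¹ * (c * g * c⁻¹ * g⁻¹) := by group
        have hZmem : (c * k) * g * (c * k)⁻¹ * g⁻¹ ∈ Z := by
          rw [hid]
          exact mul_mem (hZn.conj_mem _ (((hKmem k).mp hk).2.2 g) c) (hCcomm c hc g)
        refine Subgroup.mem_inf.mpr ⟨le_sup_left (a := C) (b := K) (hZmemC hZmem), ?_⟩
        rw [Subgroup.mem_centralizer_iff]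
        intro a ha
        exact hZC' _ hZmem a ha
      · intro x hx
        obtain ⟨c, hc, k, hk, rfl⟩ := hCK x hx
        have hcomm_ck : k * c = c * k := (hKC k hk c hc).symm
        have hsqZ : (c * k) ^ 2 ∈ Z := by
          have hid : (c * k) ^ 2 = (c ^ 2) * (k ^ 2) := by
            rw [pow_two, pow_two, pow_two]
            calc (c * k) * (c * k) = c * (k * c) * k := by group
              _ = c * (c * k) * k := by rw [hcomm_ck]
              _ = (c * c) * (k * k) := by group
          rw [hid]
          exact mul_mem (Subgroup.mem_inf.mpr ⟨pow_mem hc 2, hCsq c hc⟩)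
            (((hKmem k).mp hk).2.1)
        rw [Subgroup.mem_centralizer_iff]
        intro a ha
        exact hZC' _ hsqZ a ha
    have heq := le_antisymm le_sup_left (hCmax hC'S le_sup_left)
    have hh₁K : h₁ ∈ K := (hKmem h₁).mpr ⟨hh₁H, hh₁sq, hh₁comm⟩
    have hh₁C' : h₁ ∈ C := by
      rw [show C = C ⊔ K from heq]
      exact le_sup_right (a := C) (b := K) hh₁K
    exact hh₁C hh₁C'
  -- the subgroup of elements of order dividing 4 in C
  let D : Subgroup P :=
    { carrier := {x : P | x ∈ C ∧ x ^ 4 = 1}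
      one_mem' := ⟨C.one_mem, one_pow 4⟩
      mul_mem' := by
        rintro x y ⟨hxC, hx4⟩ ⟨hyC, hy4⟩
        refine ⟨mul_mem hxC hyC, ?_⟩
        have htZ : y * x * y⁻¹ * x⁻¹ ∈ Z := hCcomm y hyC x
        have htx : x * (y * x * y⁻¹ * x⁻¹) = (y * x * y⁻¹ * x⁻¹) * x :=
          hcent_comm _ (hZcent htZ) x hxC
        have hty : y * (y * x * y⁻¹ * x⁻¹) = (y * x * y⁻¹ * x⁻¹) * y :=
          hcent_comm _ (hZcent htZ) y hyC
        have hxy2 : y * y * (x * x) = x * x * (y * y) := by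
          have h := hcent_comm (x ^ 2) (hCsq x hxC) (y ^ 2) (pow_mem hyC 2)
          rw [pow_two, pow_two] at h
          exact h
        exact mul_pow_four rfl htx hty (ht2 x hxC y hyC) hxy2 hx4 hy4
      inv_mem' := by
        rintro x ⟨hxC, hx4⟩
        exact ⟨inv_mem hxC, by rw [inv_pow, hx4, inv_one]⟩ }
  have hDmem : ∀ x : P, x ∈ D ↔ x ∈ C ∧ x ^ 4 = 1 := fun x => Iff.rfl
  have hDle : D ≤ C := fun x hx => ((hDmem x).mp hx).1
  have hDchar : D.Characteristic := by
    rw [Subgroup.characteristic_iff_le_comap]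
    intro φ x hx
    obtain ⟨hxC, hx4⟩ := (hDmem x).mp hx
    exact Subgroup.mem_comap.mpr ((hDmem _).mpr
      ⟨char_apply_mem hCchar φ hxC, by rw [← map_pow, hx4, map_one]⟩)
  refine ⟨D, hDchar, fun x hx => ((hDmem x).mp hx).2, ?_, ?_⟩
  · -- commutator condition
    rw [Subgroup.commutator_le]
    intro d hd g _
    obtain ⟨hdC, hd4⟩ := (hDmem d).mp hd
    rw [commutatorElement_def]
    refine Subgroup.mem_inf.mpr ⟨?_, ?_⟩
    · have hconj : g * d⁻¹ * g⁻¹ ∈ D := by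
        refine (hDmem _).mpr ⟨hCn.conj_mem d⁻¹ (inv_mem hdC) g, ?_⟩
        have hid : (g * d⁻¹ * g⁻¹) ^ 4 = g * (d⁻¹) ^ 4 * g⁻¹ := by
          rw [pow_four_eq, pow_four_eq]
          group
        rw [hid, inv_pow, hd4, inv_one, mul_one, mul_inv_cancel]
      have hid2 : d * g * d⁻¹ * g⁻¹ = d * (g * d⁻¹ * g⁻¹) := by group
      rw [hid2]
      exact mul_mem hd hconj
    · have hZmem : d * g * d⁻¹ * g⁻¹ ∈ Z := hCcomm d hdC g
      exact Subgroup.centralizer_le (fun x hx => hDle hx) (hZcent hZmem)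
  · -- detection of odd automorphisms
    intro φ hodd hfixD
    -- Step 1 : φ is trivial on Z
    have hfixZ : ∀ z ∈ Z, φ z = z := by
      have main : ∀ m : ℕ, ∀ z ∈ Z, z ^ 2 ^ (m + 2) = 1 → φ z = z := by
        intro m
        induction m with
        | zero =>
          intro z hz h4
          exact hfixD z ((hDmem z).mpr ⟨hZmemC hz, by simpa using h4⟩)
        | succ m ih =>
          intro z hz h
          have hz2 : z ^ 2 ∈ Z := pow_mem hz 2
          have h2 : (z ^ 2) ^ 2 ^ (m + 2) = 1 := by
            rw [← pow_mul]
            rw [show 2 * 2 ^ (m + 2) = 2 ^ (m + 1 + 2) from by ring]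
            exact h
          have hfz2 : φ (z ^ 2) = z ^ 2 := ih (z ^ 2) hz2 h2
          have hφz : φ z ∈ Z := char_apply_mem hZchar φ hz
          have hcZ : z⁻¹ * φ z ∈ Z := mul_mem (inv_mem hz) hφz
          have hzzc : φ z * z⁻¹ = z⁻¹ * φ z :=
            (hcent_comm (φ z) (hZcent hφz) z⁻¹ (hZmemC (inv_mem hz))).symm
          have hzz : φ z * φ z = z * z := by
            rw [← map_mul, show z * z = z ^ 2 from (pow_two z).symm, hfz2, pow_two]
          have hc2 : (z⁻¹ * φ z) * (z⁻¹ * φ z) = 1 := by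
            calc (z⁻¹ * φ z) * (z⁻¹ * φ z) = z⁻¹ * (φ z * z⁻¹) * φ z := by group
              _ = z⁻¹ * (z⁻¹ * φ z) * φ z := by rw [hzzc]
              _ = z⁻¹ * z⁻¹ * (φ z * φ z) := by group
              _ = z⁻¹ * z⁻¹ * (z * z) := by rw [hzz]
              _ = 1 := by group
          have hc4 : (z⁻¹ * φ z) ^ 4 = 1 := by rw [pow_four_eq, hc2, one_mul]
          have hfc : φ (z⁻¹ * φ z) = z⁻¹ * φ z :=
            hfixD _ ((hDmem _).mpr ⟨hZmemC hcZ, hc4⟩)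
          exact fix_of_odd_aux φ hodd (mul_inv_cancel_left z (φ z)).symm hfc
            (m := 1) (by rw [show (2 : ℕ) ^ 1 = 2 from rfl, pow_two, hc2])
      intro z hz
      obtain ⟨m, hm⟩ := hP z
      exact main m z hz (by rw [show (2 : ℕ) ^ (m + 2) = 2 ^ m * 4 from by ring,
        pow_mul, hm, one_pow])
    -- Step 2 : φ is trivial on C
    have hfixC : ∀ x ∈ C, φ x = x := by
      intro x hx
      have hφx : φ x ∈ C := char_apply_mem hCchar φ hx
      have hcC : x⁻¹ * φ x ∈ C := mul_mem (inv_mem hx) hφx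
      have hx2Z : x ^ 2 ∈ Z := Subgroup.mem_inf.mpr ⟨pow_mem hx 2, hCsq x hx⟩
      have hfx2 : φ (x ^ 2) = x ^ 2 := hfixZ _ hx2Z
      have heq : φ x * φ x = x * x := by
        rw [← map_mul, show x * x = x ^ 2 from (pow_two x).symm, hfx2, pow_two]
      have hkey : (x⁻¹ * φ x) * x * (x⁻¹ * φ x) = x := by
        have h' : x * ((x⁻¹ * φ x) * x * (x⁻¹ * φ x)) = x * x := by
          rw [show x * ((x⁻¹ * φ x) * x * (x⁻¹ * φ x)) = φ x * φ x from by group]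
          exact heq
        exact mul_left_cancel h'
      set c := x⁻¹ * φ x with hcdef
      have htt : (x * c * x⁻¹ * c⁻¹) * (x * c * x⁻¹ * c⁻¹) = 1 := ht2 c hcC x hx
      have ht_eq : x * c * x⁻¹ * c⁻¹ = c⁻¹ * c⁻¹ := by
        have h1 : x * c = c⁻¹ * x := by
          calc x * c = c⁻¹ * (c * x * c) := by group
            _ = c⁻¹ * x := by rw [hkey]
        rw [h1]
        group
      rw [ht_eq] at htt
      have hinv4 : (c⁻¹) ^ 4 = 1 := by rw [pow_four_eq, htt]
      have hc4 : c ^ 4 = 1 := by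
        rw [inv_pow] at hinv4
        exact inv_eq_one.mp hinv4
      have hfc : φ c = c := hfixD c ((hDmem c).mpr ⟨hcC, hc4⟩)
      exact fix_of_odd_aux φ hodd (mul_inv_cancel_left x (φ x)).symm hfc
        (m := 2) (by rw [show (2 : ℕ) ^ 2 = 4 from rfl]; exact hc4)
    -- Step 3 : φ is trivial on P
    have hfixP : ∀ x : P, φ x = x := by
      intro x
      have hcH : x⁻¹ * φ x ∈ centralizer (C : Set P) := by
        rw [Subgroup.mem_centralizer_iff]
        intro a ha
        have h1 : φ (x * a * x⁻¹) = x * a * x⁻¹ := hfixC _ (hCn.conj_mem a ha x)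
        rw [map_mul, map_mul, map_inv, hfixC a ha] at h1
        have h2 : φ x * a = x * a * x⁻¹ * φ x := by
          rw [show x * a * x⁻¹ * φ x = (φ x * a * (φ x)⁻¹) * φ x from by rw [h1]]
          group
        calc a * (x⁻¹ * φ x) = x⁻¹ * (x * a * x⁻¹ * φ x) := by group
          _ = x⁻¹ * (φ x * a) := by rw [h2]
          _ = (x⁻¹ * φ x) * a := by group
      have hcC : x⁻¹ * φ x ∈ C := hHle hcH
      have hfc : φ (x⁻¹ * φ x) = x⁻¹ * φ x := hfixC _ hcC
      obtain ⟨m, hm⟩ := hP (x⁻¹ * φ x)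
      exact fix_of_odd_aux φ hodd (mul_inv_cancel_left x (φ x)).symm hfc hm
    exact MulEquiv.ext fun x => (hfixP x).trans rfl
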